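/- arXiv:1108.3622 — 8 statements merged into one kernel-verified Lean document; each statement's English description precedes it below -/
import Mathlib

section
/- The Thue–Morse word (the fixed point starting with a of the morphism a ↦ ab, b ↦ ba over alphabet {a,b}) contains no factor of the form u u u with u a nonempty word (i.e., it avoids the pattern ααα). -/
/-- `v` is a factor of the infinite word `w`. -/
def FactorOf {α : Type*} (v : List α) (w : ℕ → α) : Prop :=
  ∃ i : ℕ, v = (List.range v.length).map fun j => w (i + j)

/-- No three consecutive equal letters in `t`. -/
lemma tm_no_three (t : ℕ → Bool)
    (hfix : ∀ n : ℕ, t (2 * n) = t n ∧ t (2 * n + 1) = !(t n)) :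
    ∀ k : ℕ, ¬ (t k = t (k + 1) ∧ t (k + 1) = t (k + 2)) := by
  intro k ⟨h1, h2⟩
  rcases Nat.even_or_odd k with ⟨m, hm⟩ | ⟨m, hm⟩
  · have e1 := (hfix m).1
    have e2 := (hfix m).2
    rw [show 2 * m = k by omega] at e1 e2
    rw [e1, e2] at h1
    simp at h1
  · have e1 := (hfix (m + 1)).1
    have e2 := (hfix (m + 1)).2
    rw [show 2 * (m + 1) = k + 1 by omega] at e1 e2
    rw [show k + 2 = k + 1 + 1 by omega] at h2
    rw [e1, e2] at h2
    simp at h2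

/-- `t` has no factor of length `3n` with period `n ≥ 1`. -/
lemma tm_no_period (t : ℕ → Bool)
    (hfix : ∀ n : ℕ, t (2 * n) = t n ∧ t (2 * n + 1) = !(t n)) :
    ∀ n : ℕ, 1 ≤ n → ∀ i : ℕ,
      ¬ (∀ p : ℕ, i ≤ p → p < i + 2 * n → t p = t (p + n)) := by
  intro n
  induction n using Nat.strong_induction_on with
  | _ n ih =>
    intro hn i hper
    rcases Nat.even_or_odd n with ⟨m, hm⟩ | ⟨m, hm⟩
    · -- n = 2m even: reduce
      have hm1 : 1 ≤ m := by omega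
      set i' := (i + 1) / 2 with hi'
      have h2i' : i ≤ 2 * i' ∧ 2 * i' ≤ i + 1 := by omega
      apply ih m (by omega) hm1 i'
      intro q hq1 hq2
      have hq : t (2 * q) = t (2 * q + n) := hper (2 * q) (by omega) (by omega)
      have e1 := (hfix q).1
      have e2 := (hfix (q + m)).1
      rw [show 2 * q + n = 2 * (q + m) by omega] at hq
      rw [← e1, ← e2]; exact hq
    · -- n = 2m+1 odd
      rcases Nat.lt_or_ge m 1 with h1 | hm1
      · -- n = 1
        have hA1 : t i = t (i + 1) := by
          have := hper i (le_refl i) (by omega)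
          rwa [show i + n = i + 1 by omega] at this
        have hA2 : t (i + 1) = t (i + 2) := by
          have := hper (i + 1) (by omega) (by omega)
          rwa [show i + 1 + n = i + 2 by omega] at this
        exact tm_no_three t hfix i ⟨hA1, hA2⟩
      · -- n ≥ 3 odd
        -- alternation on the window
        have halt : ∀ p : ℕ, i ≤ p → p + 1 < i + 2 * n → t (p + 1) = !(t p) := by
          intro p hp1 hp2
          rcases Nat.even_or_odd p with ⟨k, hk⟩ | ⟨k, hk⟩
          · have e1 := (hfix k).1
            have e2 := (hfix k).2
            rw [show 2 * k = p by omega] at e1 e2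
            rw [e2, e1]
          · have hpn : p + n = 2 * (k + m + 1) := by omega
            have e1 : t p = t (k + m + 1) := by
              have := hper p hp1 (by omega)
              rw [hpn] at this
              rw [this, (hfix (k + m + 1)).1]
            have e2 : t (p + 1) = !(t (k + m + 1)) := by
              have := hper (p + 1) (by omega) (by omega)
              rw [show p + 1 + n = 2 * (k + m + 1) + 1 by omega] at this
              rw [this, (hfix (k + m + 1)).2]
            rw [e1, e2]
        -- pick an even q near the start of the window
        obtain ⟨k, hk⟩ : ∃ k, 2 * k = i ∨ 2 * k = i + 1 := by
          rcases Nat.even_or_odd i with ⟨k, hk⟩ | ⟨k, hk⟩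
          · exact ⟨k, Or.inl (by omega)⟩
          · exact ⟨k + 1, Or.inr (by omega)⟩
        set q := 2 * k with hq
        have hqi : i ≤ q ∧ q ≤ i + 1 := by omega
        have a1 := halt q (by omega) (by omega)
        have a2 := halt (q + 1) (by omega) (by omega)
        have a3 := halt (q + 2) (by omega) (by omega)
        have a4 := halt (q + 3) (by omega) (by omega)
        rw [show q + 1 + 1 = q + 2 by omega] at a2
        rw [show q + 2 + 1 = q + 3 by omega] at a3
        rw [show q + 3 + 1 = q + 4 by omega] at a4
        have eq1 : t (q + 2) = t q := by rw [a2, a1]; simp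
        have eq2 : t (q + 4) = t (q + 2) := by rw [a4, a3]; simp
        apply tm_no_three t hfix k
        constructor
        · have b0 := (hfix k).1
          have b1 := (hfix (k + 1)).1
          rw [show 2 * (k + 1) = q + 2 by omega] at b1
          rw [← hq] at b0
          rw [← b0, ← b1]; exact eq1.symm
        · have b1 := (hfix (k + 1)).1
          have b2 := (hfix (k + 2)).1
          rw [show 2 * (k + 1) = q + 2 by omega] at b1
          rw [show 2 * (k + 2) = q + 4 by omega] at b2
          rw [← b1, ← b2]; exact eq2.symm

/-- The Thue–Morse word `t` (fixed point, starting with `a = false`, of the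
morphism `a ↦ ab`, `b ↦ ba`, i.e. `t (2n) = t n` and `t (2n+1) = ¬ t n`)
avoids the pattern ααα: it contains no factor `u ++ u ++ u` with `u` nonempty. -/
theorem thue_morse_avoids_cube (t : ℕ → Bool)
    (h0 : t 0 = false)
    (hfix : ∀ n : ℕ, t (2 * n) = t n ∧ t (2 * n + 1) = !(t n)) :
    ∀ u : List Bool, u ≠ [] → ¬ FactorOf (u ++ u ++ u) t := by
  intro u hu ⟨i, hv⟩
  set n := u.length with hn
  have hn1 : 1 ≤ n := by
    rcases u with _ | ⟨a, u'⟩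
    · exact absurd rfl hu
    · simp [hn]
  have hlen : (u ++ u ++ u).length = 3 * n := by simp [hn]; omega
  have key : ∀ j, j < 3 * n → (u ++ u ++ u)[j]? = some (t (i + j)) := by
    intro j hj
    conv_lhs => rw [hv]
    rw [List.getElem?_map, List.getElem?_range (by omega : j < (u ++ u ++ u).length)]
    rfl
  have hval : ∀ j, j < n → t (i + j) = t (i + j + n) ∧ t (i + j + n) = t (i + j + 2 * n) := by
    intro j hj
    have a1 : (u ++ u ++ u)[j]? = u[j]? := by
      rw [List.getElem?_append, if_pos (by simp [← hn]; omega : j < (u ++ u).length),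
        List.getElem?_append, if_pos (by omega : j < u.length)]
    have a2 : (u ++ u ++ u)[n + j]? = u[j]? := by
      rw [List.getElem?_append, if_pos (by simp [← hn]; omega : n + j < (u ++ u).length),
        List.getElem?_append, if_neg (by omega : ¬ (n + j < u.length))]
      congr 1; omega
    have a3 : (u ++ u ++ u)[2 * n + j]? = u[j]? := by
      rw [List.getElem?_append, if_neg (by simp [← hn]; omega : ¬ (2 * n + j < (u ++ u).length))]
      congr 1; simp [← hn]; omega
    have k1 := key j (by omega)
    have k2 := key (n + j) (by omega)
    have k3 := key (2 * n + j) (by omega)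
    rw [a1] at k1; rw [a2] at k2; rw [a3] at k3
    constructor
    · have h12 : some (t (i + j)) = some (t (i + (n + j))) := by rw [← k1, ← k2]
      have := Option.some.inj h12
      rwa [show i + (n + j) = i + j + n by omega] at this
    · have h23 : some (t (i + (n + j))) = some (t (i + (2 * n + j))) := by rw [← k2, ← k3]
      have := Option.some.inj h23
      rwa [show i + (n + j) = i + j + n by omega,
        show i + (2 * n + j) = i + j + 2 * n by omega] at this
  apply tm_no_period t hfix n hn1 i
  intro p hp1 hp2
  rcases Nat.lt_or_ge p (i + n) with h | h
  · have h' := (hval (p - i) (by omega)).1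
    rwa [show i + (p - i) = p by omega] at h'
  · have h' := (hval (p - i - n) (by omega)).2
    rwa [show i + (p - i - n) + n = p by omega,
      show i + (p - i - n) + 2 * n = p + n by omega] at h'
end

section
/- The Thue–Morse word contains no factor of the form u v u v u with u, v nonempty words (i.e., it avoids the pattern αβαβα). -/
private lemma tm_no_overlap (t : ℕ → Bool)
    (hfix : ∀ n : ℕ, t (2 * n) = t n ∧ t (2 * n + 1) = !(t n)) :
    ∀ n, 1 ≤ n → ∀ k, ¬ (∀ j ≤ n, t (k + j) = t (k + n + j)) := by
  have he : ∀ n, t (2 * n) = t n := fun n => (hfix n).1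
  have ho : ∀ n, t (2 * n + 1) = !(t n) := fun n => (hfix n).2
  have hEodd : ∀ q, t q = t (q + 1) → q % 2 = 1 := by
    intro q hq
    rcases Nat.even_or_odd q with ⟨x, hx⟩ | ⟨x, hx⟩
    · exfalso
      have h1 : t q = t x := by rw [hx, ← two_mul]; exact he x
      have h2 : t (q + 1) = !(t x) := by
        rw [hx, ← two_mul]; exact ho x
      rw [h1, h2] at hq
      simp at hq
    · omega
  intro n
  induction n using Nat.strong_induction_on with
  | _ n ih =>
    intro hn k hper
    rcases Nat.even_or_odd n with ⟨m, hm⟩ | ⟨m, hm⟩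
    · -- even case : n = m + m
      have hm1 : 1 ≤ m := by omega
      have hm2 : m < n := by omega
      refine ih m hm2 hm1 (k / 2) ?_
      intro j hj
      rcases Nat.even_or_odd k with ⟨l, hl⟩ | ⟨l, hl⟩
      · have hl2 : k / 2 = l := by omega
        have e1 : t (k / 2 + j) = t (k + 2 * j) := by
          rw [hl2, show k + 2 * j = 2 * (l + j) by omega, he]
        have e2 : t (k / 2 + m + j) = t (k + n + 2 * j) := by
          rw [hl2, show k + n + 2 * j = 2 * (l + m + j) by omega, he]
        rw [e1, e2]; exact hper (2 * j) (by omega)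
      · have hl2 : k / 2 = l := by omega
        have e1 : t (k + 2 * j) = !(t (k / 2 + j)) := by
          rw [hl2, show k + 2 * j = 2 * (l + j) + 1 by omega, ho]
        have e2 : t (k + n + 2 * j) = !(t (k / 2 + m + j)) := by
          rw [hl2, show k + n + 2 * j = 2 * (l + m + j) + 1 by omega, ho]
        have h := hper (2 * j) (by omega)
        rw [e1, e2] at h
        exact Bool.not_inj h
    · -- odd case : n = 2 * m + 1
      have hB : ∀ x, k ≤ 2 * x + 1 → 2 * x + 2 ≤ k + n → t x = t (x + 1) := by
        intro x h1 h2
        have p1 := hper (2 * x + 1 - k) (by omega)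
        have p2 := hper (2 * x + 2 - k) (by omega)
        rw [show k + (2 * x + 1 - k) = 2 * x + 1 by omega,
            show k + n + (2 * x + 1 - k) = 2 * (x + m + 1) by omega] at p1
        rw [show k + (2 * x + 2 - k) = 2 * (x + 1) by omega,
            show k + n + (2 * x + 2 - k) = 2 * (x + m + 1) + 1 by omega] at p2
        rw [ho, he] at p1
        rw [he, ho] at p2
        rw [← p1] at p2
        simp at p2
        exact p2.symm
      have hA : ∀ x, k ≤ 2 * x → 2 * x + 1 ≤ k + n → t (x + m) = t (x + m + 1) := by
        intro x h1 h2
        have p1 := hper (2 * x - k) (by omega)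
        have p2 := hper (2 * x + 1 - k) (by omega)
        rw [show k + (2 * x - k) = 2 * x by omega,
            show k + n + (2 * x - k) = 2 * (x + m) + 1 by omega] at p1
        rw [show k + (2 * x + 1 - k) = 2 * x + 1 by omega,
            show k + n + (2 * x + 1 - k) = 2 * (x + m + 1) by omega] at p2
        rw [he, ho] at p1
        rw [ho, he] at p2
        have q1 : t (x + m) = !(t x) := by rw [p1]; simp
        rw [q1, p2]
      by_cases hm0 : m = 0
      · have hn1 : n = 1 := by omega
        have e1 : t k = t (k + 1) := by
          have h := hper 0 (by omega); simpa [hn1] using h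
        have e2 : t (k + 1) = t (k + 1 + 1) := by
          have h := hper 1 (by omega)
          rw [hn1] at h
          simpa using h
        have o1 := hEodd k e1
        have o2 := hEodd (k + 1) e2
        omega
      · have hmge : 1 ≤ m := by omega
        obtain ⟨x0, hx1, hx2⟩ : ∃ x0, k ≤ 2 * x0 ∧ 2 * x0 ≤ k + 1 :=
          ⟨(k + 1) / 2, by omega, by omega⟩
        have hA0 := hA x0 hx1 (by omega)
        have hB0 := hB x0 (by omega) (by omega)
        have oA := hEodd _ hA0
        have oB := hEodd _ hB0
        by_cases hm1 : m = 1
        · omega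
        · have hB1 := hB (x0 + 1) (by omega) (by omega)
          have oB1 := hEodd _ hB1
          omega

/-- The Thue–Morse word `t` (fixed point, starting with `a = false`, of the
morphism `a ↦ ab`, `b ↦ ba`) avoids the pattern αβαβα: it contains no factor
`u ++ v ++ u ++ v ++ u` with `u, v` nonempty. -/
theorem thue_morse_avoids_ababa (t : ℕ → Bool)
    (h0 : t 0 = false)
    (hfix : ∀ n : ℕ, t (2 * n) = t n ∧ t (2 * n + 1) = !(t n)) :
    ∀ u v : List Bool, u ≠ [] → v ≠ [] →
      ¬ FactorOf (u ++ v ++ u ++ v ++ u) t := by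
  intro u v hu hv h
  obtain ⟨i, hfac⟩ := h
  have ha : 1 ≤ u.length := List.length_pos_iff.mpr hu
  have hb : 1 ≤ v.length := List.length_pos_iff.mpr hv
  set a := u.length with hadef
  set b := v.length with hbdef
  have hlen : (u ++ v ++ u ++ v ++ u).length = 3 * a + 2 * b := by
    simp [List.length_append]; omega
  have hget : ∀ j, j < 3 * a + 2 * b →
      (u ++ v ++ u ++ v ++ u)[j]? = some (t (i + j)) := by
    intro j hj
    rw [hfac, List.getElem?_map, List.getElem?_range (by rw [hlen]; omega)]
    simp
  have h1 : ∀ j, j < 2 * a + b →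
      (u ++ v ++ u ++ v ++ u)[j]? = (u ++ v ++ u)[j]? := by
    intro j hj
    have e : u ++ v ++ u ++ v ++ u = (u ++ v ++ u) ++ (v ++ u) := by
      simp [List.append_assoc]
    rw [e, List.getElem?_append, if_pos (by simp [List.length_append]; omega)]
  have h2 : ∀ j, (u ++ v ++ u ++ v ++ u)[(a + b) + j]? = (u ++ v ++ u)[j]? := by
    intro j
    have e : u ++ v ++ u ++ v ++ u = (u ++ v) ++ (u ++ v ++ u) := by
      simp [List.append_assoc]
    rw [e, List.getElem?_append, if_neg (by simp [List.length_append]; omega)]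
    congr 1
    simp [List.length_append]; omega
  have hper : ∀ j ≤ a + b, t (i + j) = t (i + (a + b) + j) := by
    intro j hj
    have s1 : some (t (i + j)) = some (t (i + ((a + b) + j))) := by
      rw [← hget j (by omega), ← hget ((a + b) + j) (by omega),
          h1 j (by omega), h2 j]
    have : i + (a + b) + j = i + ((a + b) + j) := by omega
    rw [this]
    exact Option.some.inj s1
  exact tm_no_overlap t hfix (a + b) (by omega) i hper
end

section
/- There is no infinite binary word that avoids the pattern α θ(α) α for all morphic involutions θ on {a,b}*. That is, every infinite word w over {a,b} has a factor of the form u θ(u) u for some nonempty word u and some morphic involution θ (θ being either the identity or the swap a ↔ b extended morphically). -/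
lemma fin2_add_add : ∀ z c : Fin 2, z + c + c = z := by decide

lemma fin2_add_sub : ∀ a b : Fin 2, a + (b - a) = b := by decide

lemma fin2_ne : ∀ a b : Fin 2, a ≠ b → a = b + 1 := by decide

/-- No infinite binary word avoids `α θ(α) α` for all morphic involutions:
every `w : ℕ → Fin 2` has a factor `u ++ θ(u) ++ u` for some nonempty `u`
and some morphic involution `θ` (induced by a letter involution `g`). -/
theorem binary_contains_a_ta_a_morphic (w : ℕ → Fin 2) :
    ∃ u : List (Fin 2), u ≠ [] ∧ ∃ g : Fin 2 → Fin 2, (∀ z, g (g z) = z) ∧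
      FactorOf (u ++ u.map g ++ u) w := by
  by_cases h : ∃ i, w (i + 2) = w i
  · obtain ⟨i, hi⟩ := h
    refine ⟨[w i], by simp, fun z => z + (w (i + 1) - w i), fun z => fin2_add_add z _, i, ?_⟩
    simp [List.range_succ, fin2_add_sub, hi]
  · push_neg at h
    have h' : ∀ i, w (i + 2) = w i + 1 := fun i => fin2_ne _ _ (h i)
    refine ⟨[w 0, w 1], by simp, fun z => z + 1, fun z => fin2_add_add z 1, 0, ?_⟩
    have h4 : w 4 = w 0 := by rw [show (4:ℕ) = 2 + 2 from rfl, h' 2, h' 0, fin2_add_add _ _]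
    have h5 : w 5 = w 1 := by rw [show (5:ℕ) = 3 + 2 from rfl, h' 3, show (3:ℕ) = 1 + 2 from rfl,
      h' 1, fin2_add_add _ _]
    simp [List.range_succ, h' 0, h' 1, h4, h5]
end

section
/- Let w be the infinite word over {a,b,c} obtained from the Thue–Morse word by replacing each a' by aabbc and each b' by aaccb. Then for every antimorphic involution θ on {a,b,c}* and every nonempty word u, the word u θ(u) u is not a factor of w. Hence the antimorphic θ-avoidance index of α θ(α) α equals 3. -/
def Fw4 (b0 b1 b2 b3 : Bool) (m : ℕ) : Fin 3 :=
  (if [b0,b1,b2,b3].getD (m/5) false then ([0,0,2,2,1] : List (Fin 3))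
   else ([0,0,1,1,2] : List (Fin 3))).getD (m%5) 0

theorem master : ∀ (g : Fin 3 → Fin 3), (∀ z, g (g z) = z) → ∀ b0 b1 b2 b3 : Bool,
    ¬(b0 = b1 ∧ b1 = b2) → ¬(b1 = b2 ∧ b2 = b3) → ∀ n : Fin 6, ∀ r : Fin 5, 1 ≤ n.val →
    ¬((∀ j : Fin 5, j.val < n.val →
        Fw4 b0 b1 b2 b3 (r.val + j.val) = Fw4 b0 b1 b2 b3 (r.val + 2*n.val + j.val)) ∧
      (∀ j : Fin 5, j.val < n.val →
        Fw4 b0 b1 b2 b3 (r.val + n.val + j.val) = g (Fw4 b0 b1 b2 b3 (r.val + n.val - 1 - j.val)))) := by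
  decide

theorem part1 (t : ℕ → Bool)
    (hfix : ∀ n : ℕ, t (2 * n) = t n ∧ t (2 * n + 1) = !(t n))
    (w : ℕ → Fin 3)
    (hw : ∀ n : ℕ, w n =
      (if t (n / 5) then ([0, 0, 2, 2, 1] : List (Fin 3))
       else ([0, 0, 1, 1, 2] : List (Fin 3))).getD (n % 5) 0) :
    ∀ g : Fin 3 → Fin 3, (∀ z, g (g z) = z) →
      ∀ u : List (Fin 3), u ≠ [] →
        ¬ FactorOf (u ++ (u.map g).reverse ++ u) w := by
  intro g hg u hu hfac
  obtain ⟨i, hrep⟩ := hfac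
  set n := u.length with hn
  have hn1 : 0 < n := List.length_pos_iff.mpr hu
  have hlen : (u ++ (u.map g).reverse ++ u).length = 3 * n := by
    simp only [List.length_append, List.length_reverse, List.length_map]
    omega
  have hval : ∀ j, j < 3*n → (u ++ (u.map g).reverse ++ u)[j]? = some (w (i+j)) := by
    intro j hj
    conv_lhs => rw [hrep]
    rw [List.getElem?_map, List.getElem?_range (by rw [hlen]; exact hj)]
    rfl
  have hu1 : ∀ j, j < n → u[j]? = some (w (i+j)) := by
    intro j hj
    have h := hval j (by omega)
    rwa [List.getElem?_append_left (by
      simp only [List.length_append, List.length_reverse, List.length_map]; omega),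
      List.getElem?_append_left (by omega)] at h
  have hEq : ∀ j, j < n → w (i + j) = w (i + (2*n + j)) := by
    intro j hj
    have h := hval (2*n + j) (by omega)
    rw [List.getElem?_append_right (by
      simp only [List.length_append, List.length_reverse, List.length_map]; omega)] at h
    have e : 2*n + j - (u ++ (u.map g).reverse).length = j := by
      simp only [List.length_append, List.length_reverse, List.length_map]; omega
    rw [e, hu1 j hj] at h
    exact Option.some.inj h
  have hMir : ∀ j, j < n → w (i + (n + j)) = g (w (i + (n - 1 - j))) := by
    intro j hj
    have h := hval (n + j) (by omega)
    rw [List.getElem?_append_left (by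
      simp only [List.length_append, List.length_reverse, List.length_map]; omega)] at h
    rw [List.getElem?_append_right (by omega)] at h
    have e : n + j - u.length = j := by omega
    rw [e] at h
    rw [List.getElem?_reverse (by simp only [List.length_map]; omega)] at h
    have e2 : (u.map g).length - 1 - j = n - 1 - j := by rw [List.length_map]
    rw [e2, List.getElem?_map, hu1 (n-1-j) (by omega)] at h
    exact (Option.some.inj h).symm
  -- letter lemmas
  have hw0 : ∀ p, p % 5 = 0 → w p = 0 := by
    intro p hp; rw [hw p, hp]; cases h : t (p/5) <;> simp [h]
  have hw1 : ∀ p, p % 5 = 1 → w p = 0 := by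
    intro p hp; rw [hw p, hp]; cases h : t (p/5) <;> simp [h]
  have hw2 : ∀ p, p % 5 = 2 → w p = if t (p/5) then 2 else 1 := by
    intro p hp; rw [hw p, hp]; cases h : t (p/5) <;> simp [h]
  have hw3 : ∀ p, p % 5 = 3 → w p = if t (p/5) then 2 else 1 := by
    intro p hp; rw [hw p, hp]; cases h : t (p/5) <;> simp [h]
  have hw4 : ∀ p, p % 5 = 4 → w p = if t (p/5) then 1 else 2 := by
    intro p hp; rw [hw p, hp]; cases h : t (p/5) <;> simp [h]
  have hZ : ∀ p, w p = 0 → p % 5 = 0 ∨ p % 5 = 1 := by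
    intro p hp
    by_contra hc
    push_neg at hc
    have h5 : p%5 = 2 ∨ p%5 = 3 ∨ p%5 = 4 := by omega
    rcases h5 with h|h|h
    · rw [hw2 p h] at hp; cases ht : t (p/5) <;> rw [ht] at hp <;> exact absurd hp (by decide)
    · rw [hw3 p h] at hp; cases ht : t (p/5) <;> rw [ht] at hp <;> exact absurd hp (by decide)
    · rw [hw4 p h] at hp; cases ht : t (p/5) <;> rw [ht] at hp <;> exact absurd hp (by decide)
  have CL : ∀ q, w q = w (q+1) → (q % 5 = 0 ∧ w q = 0) ∨ (q % 5 = 2 ∧ w q ≠ 0) := by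
    intro q hq
    have h5 : q%5 = 0 ∨ q%5 = 1 ∨ q%5 = 2 ∨ q%5 = 3 ∨ q%5 = 4 := by omega
    rcases h5 with h|h|h|h|h
    · exact Or.inl ⟨h, hw0 q h⟩
    · exfalso
      rw [hw1 q h, hw2 (q+1) (by omega)] at hq
      cases ht : t ((q+1)/5) <;> rw [ht] at hq <;> exact absurd hq (by decide)
    · refine Or.inr ⟨h, ?_⟩
      rw [hw2 q h]
      cases t (q/5) <;> decide
    · exfalso
      rw [hw3 q h, hw4 (q+1) (by omega)] at hq
      have e : (q+1)/5 = q/5 := by omega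
      rw [e] at hq
      cases ht : t (q/5) <;> rw [ht] at hq <;> exact absurd hq (by decide)
    · exfalso
      rw [hw4 q h, hw0 (q+1) (by omega)] at hq
      cases ht : t (q/5) <;> rw [ht] at hq <;> exact absurd hq (by decide)
  have t3 : ∀ k, ¬(t k = t (k+1) ∧ t (k+1) = t (k+2)) := by
    rintro k ⟨h1, h2⟩
    rcases Nat.even_or_odd k with ⟨m, hm⟩ | ⟨m, hm⟩
    · rw [show k = 2*m from by omega, show 2*m+1 = 2*m+1 from rfl] at h1
      rw [(hfix m).1, (hfix m).2] at h1
      simp at h1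
    · rw [show k+1 = 2*(m+1) from by omega, show k+2 = 2*(m+1)+1 from by omega] at h2
      rw [(hfix (m+1)).1, (hfix (m+1)).2] at h2
      simp at h2
  by_cases hn5 : n ≤ 5
  · -- small case via master
    have hbridge : ∀ j, j ≤ 15 →
        w (i+j) = Fw4 (t (i/5)) (t (i/5+1)) (t (i/5+2)) (t (i/5+3)) (i%5 + j) := by
      intro j hj
      rw [hw (i+j)]
      unfold Fw4
      have e1 : (i+j) % 5 = (i%5+j) % 5 := by omega
      have e2 : (i+j) / 5 = i/5 + (i%5+j)/5 := by omega
      have h4 : (i%5+j)/5 = 0 ∨ (i%5+j)/5 = 1 ∨ (i%5+j)/5 = 2 ∨ (i%5+j)/5 = 3 := by omega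
      have e3 : [t (i/5), t (i/5+1), t (i/5+2), t (i/5+3)].getD ((i%5+j)/5) false
          = t (i/5 + (i%5+j)/5) := by
        rcases h4 with h|h|h|h <;> rw [h] <;> simp
      rw [e1, e2, e3]
    refine master g hg (t (i/5)) (t (i/5+1)) (t (i/5+2)) (t (i/5+3)) (t3 (i/5)) (t3 (i/5+1))
      ⟨n, by omega⟩ ⟨i % 5, by omega⟩ hn1 ⟨?_, ?_⟩
    · intro j hj
      simp only [Fin.val_mk] at hj ⊢
      have h := hEq j.val hj
      rw [hbridge j.val (by omega), hbridge (2*n + j.val) (by omega)] at h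
      rw [show i%5 + 2*n + j.val = i%5 + (2*n + j.val) from by omega]
      exact h
    · intro j hj
      simp only [Fin.val_mk] at hj ⊢
      have h := hMir j.val hj
      rw [hbridge (n + j.val) (by omega), hbridge (n - 1 - j.val) (by omega)] at h
      rw [show i%5 + n + j.val = i%5 + (n + j.val) from by omega,
          show i%5 + n - 1 - j.val = i%5 + (n - 1 - j.val) from by omega]
      exact h
  · -- large case
    push_neg at hn5
    have hn6 : 6 ≤ n := hn5
    have EqS' : ∀ p, i ≤ p → p < i + n → w p = w (p + 2*n) := by
      intro p h1 h2
      have h := hEq (p - i) (by omega)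
      rw [show i + (p - i) = p from by omega,
          show i + (2*n + (p - i)) = p + 2*n from by omega] at h
      exact h
    have Mir' : ∀ p, i ≤ p → p < i + n → w (2*(i+n) - 1 - p) = g (w p) := by
      intro p h1 h2
      have h := hMir (i + n - 1 - p) (by omega)
      rw [show i + (n + (i + n - 1 - p)) = 2*(i+n) - 1 - p from by omega,
          show i + (n - 1 - (i + n - 1 - p)) = p from by omega] at h
      exact h
    -- Step 0 : 5 ∣ n
    have hs : i ≤ 5*((i+4)/5) ∧ 5*((i+4)/5) ≤ i + 4 := by omega
    set s := 5*((i+4)/5) with hsdef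
    have hs0 : s % 5 = 0 := by omega
    have hws : w s = 0 := hw0 s hs0
    have hws1 : w (s+1) = 0 := hw1 (s+1) (by omega)
    have h2n : (s + 2*n) % 5 = 0 := by
      have ha := hZ (s + 2*n) (by rw [← EqS' s (by omega) (by omega)]; exact hws)
      have hb := hZ (s + 1 + 2*n) (by rw [← EqS' (s+1) (by omega) (by omega)]; exact hws1)
      omega
    have hmod : n % 5 = 0 := by omega
    have hn10 : 10 ≤ n := by omega
    -- doubled pair at q
    have hq1 : w (2*(i+n) - 1 - (s+1)) = g 0 := by
      rw [Mir' (s+1) (by omega) (by omega), hws1]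
    have hq2 : w (2*(i+n) - 1 - s) = g 0 := by
      rw [Mir' s (by omega) (by omega), hws]
    have hqq : w (2*(i+n) - 1 - (s+1)) = w (2*(i+n) - 1 - (s+1) + 1) := by
      rw [hq1, show 2*(i+n) - 1 - (s+1) + 1 = 2*(i+n) - 1 - s from by omega, hq2]
    rcases CL _ hqq with ⟨hq0, _⟩ | ⟨hq2', hqne⟩
    · -- Case A : 2*(i+n) ≡ 2 mod 5 ; contradiction with class-2 pair
      have hs' : i ≤ 5*((i+2)/5)+2 ∧ 5*((i+2)/5)+2 ≤ i + 4 := by omega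
      set s' := 5*((i+2)/5)+2 with hs'def
      have hws' : w s' = w (s'+1) := by
        rw [hw2 s' (by omega), hw3 (s'+1) (by omega), show (s'+1)/5 = s'/5 from by omega]
      have hm1 := Mir' s' (by omega) (by omega)
      have hm2 := Mir' (s'+1) (by omega) (by omega)
      have hqq' : w (2*(i+n) - 1 - (s'+1)) = w (2*(i+n) - 1 - (s'+1) + 1) := by
        rw [hm2, show 2*(i+n) - 1 - (s'+1) + 1 = 2*(i+n) - 1 - s' from by omega, hm1, hws']
      rcases CL _ hqq' with ⟨h, _⟩ | ⟨h, _⟩ <;> omega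
    · -- Case B : g 0 ≠ 0, 2*(i+n) ≡ 4 mod 5
      rw [hq1] at hqne
      have hclass2 : ∀ p, p % 5 = 2 → i ≤ p → p < i + 2*n → w p = g 0 := by
        intro p hp hp1 hp2
        by_cases hps : p < i + n
        · have h := Mir' p hp1 hps
          rw [hw1 (2*(i+n) - 1 - p) (by omega)] at h
          have h2 := congrArg g h.symm
          rwa [hg (w p)] at h2
        · have h := Mir' (2*(i+n) - 1 - p) (by omega) (by omega)
          rw [show 2*(i+n) - 1 - (2*(i+n) - 1 - p) = p from by omega,
              hw1 (2*(i+n) - 1 - p) (by omega)] at h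
          exact h
      have hp0 := hclass2 (5*((i+2)/5)+2) (by omega) (by omega) (by omega)
      have hp1 := hclass2 (5*((i+2)/5)+7) (by omega) (by omega) (by omega)
      have hp2 := hclass2 (5*((i+2)/5)+12) (by omega) (by omega) (by omega)
      rw [hw2 _ (by omega : (5*((i+2)/5)+2) % 5 = 2),
          show (5*((i+2)/5)+2)/5 = (i+2)/5 from by omega] at hp0
      rw [hw2 _ (by omega : (5*((i+2)/5)+7) % 5 = 2),
          show (5*((i+2)/5)+7)/5 = (i+2)/5 + 1 from by omega] at hp1
      rw [hw2 _ (by omega : (5*((i+2)/5)+12) % 5 = 2),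
          show (5*((i+2)/5)+12)/5 = (i+2)/5 + 2 from by omega] at hp2
      have hITE : ∀ b1 b2 : Bool, (if b1 then (2:Fin 3) else 1) = (if b2 then 2 else 1) → b1 = b2 := by
        decide
      exact t3 ((i+2)/5) ⟨hITE _ _ (hp0.trans hp1.symm), hITE _ _ (hp1.trans hp2.symm)⟩

theorem fin2aux : ∀ a b : Fin 2, a ≠ b → b = a + 1 := by decide

theorem lb (k : ℕ) (hk : ∃ w' : ℕ → Fin k,
      ∀ g : Fin k → Fin k, (∀ z, g (g z) = z) →
        ∀ u : List (Fin k), u ≠ [] →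
          ¬ FactorOf (u ++ (u.map g).reverse ++ u) w') : 3 ≤ k := by
  by_contra hlt
  push_neg at hlt
  obtain ⟨w', hsp⟩ := hk
  interval_cases k
  · exact (w' 0).elim0
  · refine hsp id (fun z => rfl) [w' 0] (by simp) ⟨0, ?_⟩
    have hall : ∀ m, w' m = w' 0 := fun m => Subsingleton.elim _ _
    simp [List.range_succ, hall]
  · by_cases hI : ∃ i, w' i = w' (i+2)
    · obtain ⟨i, h2⟩ := hI
      by_cases hmid : w' (i+1) = w' i
      · refine hsp id (fun z => rfl) [w' i] (by simp) ⟨i, ?_⟩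
        simp [List.range_succ, h2.symm, hmid]
      · have h1 : w' (i+1) = w' i + 1 := fin2aux _ _ (fun h => hmid h.symm)
        refine hsp (fun z => z + 1) (by decide) [w' i] (by simp) ⟨i, ?_⟩
        simp [List.range_succ, h2.symm, h1]
    · push_neg at hI
      have hstep : ∀ i, w' (i+2) = w' i + 1 := fun i => fin2aux _ _ (hI i)
      have h2 := hstep 0
      have h3 := hstep 1
      have h4 := hstep 2
      have h5 := hstep 3
      have f2 : ∀ x : Fin 2, x + 1 + 1 = x := by decide
      by_cases hxy : w' 1 = w' 0
      · refine hsp (fun z => z + 1) (by decide) [w' 0, w' 1] (by simp) ⟨0, ?_⟩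
        simp [List.range_succ, h2, h3, h4, h5, hxy, f2]
      · have h1 : w' 1 = w' 0 + 1 := fin2aux _ _ (fun h => hxy h.symm)
        refine hsp id (fun z => rfl) [w' 0, w' 1] (by simp) ⟨0, ?_⟩
        simp [List.range_succ, h2, h3, h4, h5, h1, f2]

/-- Letters: `a = 0`, `b = 1`, `c = 2` in `Fin 3`.
Let `t` be the Thue–Morse word and `w` its image under `a' ↦ aabbc`,
`b' ↦ aaccb`.  Then for every antimorphic involution `θ` on `{a,b,c}*`
(a letter involution `g` composed with reversal) and every nonempty `u`,
`u θ(u) u` is not a factor of `w`; hence the antimorphic θ-avoidance index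
of `α θ(α) α` equals `3`. -/
theorem antimorphic_index_a_ta_a_eq_three (t : ℕ → Bool)
    (h0 : t 0 = false)
    (hfix : ∀ n : ℕ, t (2 * n) = t n ∧ t (2 * n + 1) = !(t n))
    (w : ℕ → Fin 3)
    (hw : ∀ n : ℕ, w n =
      (if t (n / 5) then ([0, 0, 2, 2, 1] : List (Fin 3))
       else ([0, 0, 1, 1, 2] : List (Fin 3))).getD (n % 5) 0) :
    (∀ g : Fin 3 → Fin 3, (∀ z, g (g z) = z) →
      ∀ u : List (Fin 3), u ≠ [] →
        ¬ FactorOf (u ++ (u.map g).reverse ++ u) w) ∧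
    IsLeast {k : ℕ | ∃ w' : ℕ → Fin k,
      ∀ g : Fin k → Fin k, (∀ z, g (g z) = z) →
        ∀ u : List (Fin k), u ≠ [] →
          ¬ FactorOf (u ++ (u.map g).reverse ++ u) w'} 3 := by
  have main := part1 t hfix w hw
  exact ⟨main, ⟨w, main⟩, fun k hk => lb k hk⟩
end

section
/- Every infinite binary word contains the pattern α α θ(α) for some morphic involution θ on {a,b}*, so the morphic θ-avoidance index of α α θ(α) is greater than 2. -/
lemma aux_pair (w : ℕ → Fin 2) (i : ℕ) (h : w i = w (i+1)) :
    ∃ u : List (Fin 2), u ≠ [] ∧ ∃ g : Fin 2 → Fin 2, (∀ z, g (g z) = z) ∧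
      FactorOf (u ++ u ++ u.map g) w := by
  refine ⟨[w i], by simp, ?_⟩
  by_cases h2 : w (i+2) = w i
  · exact ⟨id, fun z => rfl, i, by simp [List.range_succ, ← h, h2]⟩
  · refine ⟨fun z => 1 - z, by decide, i, ?_⟩
    have : 1 - w i = w (i+2) := by
      revert h2; generalize w (i+2) = x; generalize w i = y; revert x y; decide
    simp [List.range_succ, ← h, ← this]

/-- Every infinite binary word contains the pattern `α α θ(α)` for some morphic
involution `θ` (induced by a letter involution `g`): there are a nonempty `u`
and `g` with `u ++ u ++ θ(u)` a factor of `w`.  Hence the morphic θ-avoidance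
index of `α α θ(α)` exceeds `2`. -/
theorem binary_contains_aa_ta_morphic (w : ℕ → Fin 2) :
    ∃ u : List (Fin 2), u ≠ [] ∧ ∃ g : Fin 2 → Fin 2, (∀ z, g (g z) = z) ∧
      FactorOf (u ++ u ++ u.map g) w := by
  by_cases h0 : w 0 = w 1
  · exact aux_pair w 0 h0
  by_cases h1 : w 1 = w 2
  · exact aux_pair w 1 h1
  by_cases h2 : w 2 = w 3
  · exact aux_pair w 2 h2
  by_cases h3 : w 3 = w 4
  · exact aux_pair w 3 h3
  by_cases h4 : w 4 = w 5
  · exact aux_pair w 4 h4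
  -- alternating case
  have key : ∀ x y z : Fin 2, x ≠ y → y ≠ z → x = z := by decide
  have e2 : w 2 = w 0 := (key _ _ _ h0 h1).symm
  have e3 : w 3 = w 1 := (key _ _ _ h1 h2).symm
  have e4 : w 4 = w 2 := (key _ _ _ h2 h3).symm
  have e5 : w 5 = w 3 := (key _ _ _ h3 h4).symm
  refine ⟨[w 0, w 1], by simp, id, fun z => rfl, 0, ?_⟩
  simp [List.range_succ]
  refine ⟨e2.symm, e3.symm, ?_, ?_⟩
  · rw [e4, e2]
  · rw [e5, e3]
end

section
/- The morphic and antimorphic θ-avoidance indices of θ(α) α α are both exactly 3. -/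
def tm : ℕ → Bool
  | 0 => false
  | (n+1) => (((n+1) % 2 == 1) : Bool).xor (tm ((n+1)/2))
decreasing_by exact Nat.div_lt_self (by omega) (by omega)

lemma tm_two (n : ℕ) : tm (2*n) = tm n := by
  cases n with
  | zero => rfl
  | succ m =>
    rw [show 2*(m+1) = (2*m+1)+1 by ring, tm]
    have h1 : (2*m+1+1) % 2 = 0 := by omega
    have h2 : (2*m+1+1) / 2 = m+1 := by omega
    simp [h1, h2]

lemma tm_two_one (n : ℕ) : tm (2*n+1) = !(tm n) := by
  rw [show 2*n+1 = (2*n)+1 by ring, tm]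
  have h1 : (2*n+1) % 2 = 1 := by omega
  have h2 : (2*n+1) / 2 = n := by omega
  simp [h1, h2, Bool.xor_comm]

lemma tm_no_triple (p : ℕ) : ¬ (tm p = tm (p+1) ∧ tm (p+1) = tm (p+2)) := by
  rcases Nat.even_or_odd p with ⟨m, hm⟩ | ⟨m, hm⟩
  · subst hm
    rw [show m+m = 2*m by ring, show 2*m+1 = 2*m+1 from rfl]
    rw [tm_two, tm_two_one]
    rintro ⟨h, -⟩; simp at h
  · subst hm
    rintro ⟨-, h⟩
    rw [show 2*m+1+1 = 2*(m+1) by ring, show 2*m+1+2 = 2*(m+1)+1 by ring] at h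
    rw [tm_two, tm_two_one] at h
    simp at h

theorem tm_no_overlap_s13 : ∀ L, 0 < L → ∀ i, ¬ (∀ j ≤ L, tm (i+j) = tm (i+j+L)) := by
  intro L
  induction L using Nat.strong_induction_on with
  | _ L IH =>
    intro hL i h
    rcases Nat.even_or_odd L with ⟨M, hM⟩ | ⟨K, hK⟩
    · -- even case: L = 2M, reduce to M
      have hM2 : L = 2*M := by omega
      have hMpos : 0 < M := by omega
      apply IH M (by omega) hMpos (i/2)
      intro j hj
      have hp := h (2*j) (by omega)
      have e1 : i + 2*j = 2*(i/2+j) + i % 2 := by omega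
      have e2 : i + 2*j + L = 2*(i/2+j+M) + i % 2 := by omega
      rw [e2, e1] at hp
      rcases Nat.mod_two_eq_zero_or_one i with h2 | h2 <;> rw [h2] at hp
      · rw [Nat.add_zero, Nat.add_zero, tm_two, tm_two] at hp
        exact hp
      · rw [tm_two_one, tm_two_one] at hp
        simpa using hp
    · -- odd case: L = 2K+1
      rcases Nat.eq_zero_or_pos K with hK0 | hKpos
      · -- L = 1
        subst hK0
        apply tm_no_triple i
        constructor
        · have := h 0 (by omega); simpa [hK] using this
        · have := h 1 (by omega); simpa [hK, show i+1+1 = i+2 by omega] using this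
      · -- L = 2K+1, K ≥ 1
        have h3 : 3 ≤ L := by omega
        set m := i / 2 with hm
        rcases Nat.mod_two_eq_zero_or_one i with h2 | h2
        · -- i = 2m
          have hi : i = 2*m := by omega
          have hp0 := h 0 (by omega)
          have hp1 := h 1 (by omega)
          have hp2 := h 2 (by omega)
          have hp3 := h 3 (by omega)
          rw [hi, Nat.add_zero, hK, show 2*m + (2*K+1) = 2*(m+K)+1 by ring,
            tm_two, tm_two_one] at hp0
          rw [hi, hK, show 2*m+1 = 2*m+1 from rfl, show 2*m+1+(2*K+1) = 2*(m+K+1) by ring,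
            tm_two_one, tm_two] at hp1
          rw [hi, hK, show 2*m+2 = 2*(m+1) by ring, show 2*(m+1)+(2*K+1) = 2*(m+K+1)+1 by ring,
            tm_two, tm_two_one] at hp2
          rw [hi, hK, show 2*m+3 = 2*(m+1)+1 by ring, show (2*(m+1)+1)+(2*K+1) = 2*(m+K+2) by ring,
            tm_two_one, tm_two] at hp3
          apply tm_no_triple (m+K)
          constructor
          · show tm (m+K) = tm (m+K+1)
            revert hp0 hp1
            cases tm m <;> cases tm (m+K) <;> cases tm (m+K+1) <;> simp
          · show tm (m+K+1) = tm (m+K+2)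
            revert hp1 hp2 hp3
            cases tm m <;> cases tm (m+1) <;> cases tm (m+K+1) <;> cases tm (m+K+2) <;> simp
        · -- i = 2m+1
          have hi : i = 2*m+1 := by omega
          have hp0 := h 0 (by omega)
          have hp1 := h 1 (by omega)
          have hp2 := h 2 (by omega)
          have hp3 := h 3 (by omega)
          rw [hi, Nat.add_zero, hK, show 2*m+1 + (2*K+1) = 2*(m+K+1) by ring,
            tm_two_one, tm_two] at hp0
          rw [hi, hK, show 2*m+1+1 = 2*(m+1) by ring, show 2*(m+1)+(2*K+1) = 2*(m+K+1)+1 by ring,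
            tm_two, tm_two_one] at hp1
          rw [hi, hK, show 2*m+1+2 = 2*(m+1)+1 by ring, show (2*(m+1)+1)+(2*K+1) = 2*(m+K+2) by ring,
            tm_two_one, tm_two] at hp2
          rw [hi, hK, show 2*m+1+3 = 2*(m+2) by ring, show 2*(m+2)+(2*K+1) = 2*(m+K+2)+1 by ring,
            tm_two, tm_two_one] at hp3
          apply tm_no_triple m
          constructor
          · show tm m = tm (m+1)
            revert hp0 hp1
            cases tm m <;> cases tm (m+1) <;> cases tm (m+K+1) <;> simp
          · show tm (m+1) = tm (m+2)
            revert hp1 hp2 hp3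
            cases tm (m+1) <;> cases tm (m+2) <;> cases tm (m+K+1) <;> cases tm (m+K+2) <;> simp

noncomputable def sq3 (n : ℕ) : Fin 3 :=
  match tm n, tm (n+1) with
  | false, true => 0
  | true, false => 1
  | _, _ => 2

theorem sq3_squarefree : ∀ L, 0 < L → ∀ i, ¬ (∀ j < L, sq3 (i+j) = sq3 (i+j+L)) := by
  intro L hL i h
  have key : ∀ j ≤ L, (tm (i+j) = tm (i+j+L)) ↔ (tm i = tm (i+L)) := by
    intro j hj
    induction j with
    | zero => simp
    | succ n IHn =>
      rw [← IHn (by omega)]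
      have hn := h n (by omega)
      rw [show i+(n+1)+L = (i+n+L)+1 by omega, show i+(n+1) = (i+n)+1 by omega]
      revert hn
      unfold sq3
      cases tm (i+n) <;> cases tm (i+n+1) <;> cases tm (i+n+L) <;> cases tm (i+n+L+1) <;>
        simp
  by_cases h0 : tm i = tm (i+L)
  · apply tm_no_overlap_s13 L hL i
    intro j hj
    exact (key j hj).2 h0
  · have hall : ∀ j < L, tm (i+j) = tm (i+j+1) := by
      intro j hj
      have hne1 : ¬ (tm (i+j) = tm (i+j+L)) := fun hc => h0 ((key j (by omega)).1 hc)
      have hne2 : ¬ (tm (i+j+1) = tm (i+j+L+1)) := fun hc => h0 ((key (j+1) (by omega)).1 (by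
        rw [show i+(j+1)+L = i+j+L+1 by omega, show i+(j+1) = i+j+1 by omega]
        exact hc))
      have hj2 := h j hj
      revert hj2 hne1 hne2
      unfold sq3
      cases tm (i+j) <;> cases tm (i+j+1) <;> cases tm (i+j+L) <;> cases tm (i+j+L+1) <;>
        simp
    rcases Nat.lt_or_ge L 2 with hL2 | hL2
    · have hL1 : L = 1 := by omega
      have h1 := hall 0 (by omega)
      have hne : ¬ (tm (i+0) = tm (i+0+L)) := fun hc => h0 ((key 0 (by omega)).1 hc)
      rw [hL1] at hne
      simp at h1 hne
      exact hne h1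
    · apply tm_no_triple i
      have h1 := hall 0 (by omega)
      have h2 := hall 1 (by omega)
      simp at h1
      rw [show i+1+1 = i+2 by omega] at h2
      exact ⟨h1, h2⟩

lemma factor_get {α : Type*} {v : List α} {w : ℕ → α} (h : FactorOf v w) :
    ∃ i, ∀ j < v.length, v[j]? = some (w (i+j)) := by
  obtain ⟨i, hv⟩ := h
  refine ⟨i, fun j hj => ?_⟩
  rw [List.getElem?_eq_getElem hj, List.getElem_of_eq hv hj, List.getElem_map,
    List.getElem_range]


lemma no_square_factor {x u : List (Fin 3)} (hx : x.length = u.length) (hu : u ≠ []) :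
    ¬ FactorOf (x ++ u ++ u) sq3 := by
  intro hf
  obtain ⟨i, hg⟩ := factor_get hf
  have hLpos : 0 < u.length := List.length_pos_iff.2 hu
  set L := u.length with hL
  have hlen : (x ++ u ++ u).length = L + L + L := by
    simp only [List.length_append, hx, ← hL]
  have hxu : (x ++ u).length = L + L := by simp only [List.length_append, hx, ← hL]
  apply sq3_squarefree L hLpos (i + L)
  intro j hj
  have e1 : u[j]? = some (sq3 (i + (L + j))) := by
    rw [← hg (L+j) (by omega), show x ++ u ++ u = x ++ (u ++ u) by simp,
      List.getElem?_append_right (by omega), List.getElem?_append_left (by omega : L + j - x.length < u.length)]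
    rw [hx, Nat.add_sub_cancel_left]
  have e2 : u[j]? = some (sq3 (i + (L + L + j))) := by
    rw [← hg (L+L+j) (by omega), List.getElem?_append_right (by omega), hxu,
      Nat.add_sub_cancel_left]
  rw [e1] at e2
  have : sq3 (i + (L + j)) = sq3 (i + (L + L + j)) := by
    exact Option.some.inj e2
  rw [show i + L + j + L = i + (L + L + j) by omega, show i + L + j = i + (L + j) by omega]
  exact this

lemma fin2_eq {a b c : Fin 2} (h1 : a ≠ b) (h2 : c ≠ b) : a = c := by
  revert h1 h2; revert a b c; decide

lemma caseA {k : ℕ} (w : ℕ → Fin k) (i : ℕ) (h : w (i+1) = w (i+2)) :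
    ∃ (g : Fin k → Fin k), (∀ z, g (g z) = z) ∧ ∃ u : List (Fin k), u ≠ [] ∧
      FactorOf (u.map g ++ u ++ u) w ∧ FactorOf ((u.map g).reverse ++ u ++ u) w := by
  refine ⟨fun x => Equiv.swap (w (i+1)) (w i) x, fun z => Equiv.swap_apply_self _ _ _,
    [w (i+1)], by simp, ⟨i, ?_⟩, ⟨i, ?_⟩⟩ <;>
  · simp [Equiv.swap_apply_left, List.range_succ, ← h]

lemma caseB (w : ℕ → Fin 2) (h : ∀ i, w (i+1) ≠ w (i+2)) :
    (∃ (g : Fin 2 → Fin 2), (∀ z, g (g z) = z) ∧ ∃ u : List (Fin 2), u ≠ [] ∧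
      FactorOf (u.map g ++ u ++ u) w) ∧
    (∃ (g : Fin 2 → Fin 2), (∀ z, g (g z) = z) ∧ ∃ u : List (Fin 2), u ≠ [] ∧
      FactorOf ((u.map g).reverse ++ u ++ u) w) := by
  have step : ∀ j, w (j+3) = w (j+1) := fun j => fin2_eq (Ne.symm (h (j+1))) (h j)
  have e3 : w 3 = w 1 := step 0
  have e4 : w 4 = w 2 := step 1
  have e5 : w 5 = w 1 := (step 2).trans e3
  have e6 : w 6 = w 2 := (step 3).trans e4
  constructor
  · refine ⟨fun x => x, fun z => rfl, [w 1, w 2], by simp, ⟨1, ?_⟩⟩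
    simp [List.range_succ]
    norm_num [e3, e4, e5, e6]
  · refine ⟨fun x => Equiv.swap (w 1) (w 2) x, fun z => Equiv.swap_apply_self _ _ _,
      [w 1, w 2], by simp, ⟨1, ?_⟩⟩
    simp [List.range_succ, Equiv.swap_apply_left, Equiv.swap_apply_right]
    norm_num [e3, e4, e5, e6]

/-- The morphic and antimorphic θ-avoidance indices of `θ(α) α α` are both
exactly `3`. -/
theorem index_ta_aa_eq_three :
    IsLeast {k : ℕ | ∃ w : ℕ → Fin k,
      ∀ g : Fin k → Fin k, (∀ z, g (g z) = z) →
        ∀ u : List (Fin k), u ≠ [] → ¬ FactorOf (u.map g ++ u ++ u) w} 3 ∧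
    IsLeast {k : ℕ | ∃ w : ℕ → Fin k,
      ∀ g : Fin k → Fin k, (∀ z, g (g z) = z) →
        ∀ u : List (Fin k), u ≠ [] →
          ¬ FactorOf ((u.map g).reverse ++ u ++ u) w} 3 := by
  constructor
  · constructor
    · exact ⟨sq3, fun g hg u hu hf => no_square_factor (by simp) hu hf⟩
    · rintro k ⟨w, hw⟩
      by_contra hlt
      push_neg at hlt
      interval_cases k
      · exact (w 0).elim0
      · have h12 : w 1 = w 2 := Subsingleton.elim _ _
        obtain ⟨g, hg, u, hu, hf, -⟩ := caseA w 0 h12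
        exact hw g hg u hu hf
      · by_cases hA : ∃ i, w (i+1) = w (i+2)
        · obtain ⟨i, hi⟩ := hA
          obtain ⟨g, hg, u, hu, hf, -⟩ := caseA w i hi
          exact hw g hg u hu hf
        · push_neg at hA
          obtain ⟨⟨g, hg, u, hu, hf⟩, -⟩ := caseB w hA
          exact hw g hg u hu hf
  · constructor
    · exact ⟨sq3, fun g hg u hu hf => no_square_factor (by simp) hu hf⟩
    · rintro k ⟨w, hw⟩
      by_contra hlt
      push_neg at hlt
      interval_cases k
      · exact (w 0).elim0
      · have h12 : w 1 = w 2 := Subsingleton.elim _ _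
        obtain ⟨g, hg, u, hu, -, hf⟩ := caseA w 0 h12
        exact hw g hg u hu hf
      · by_cases hA : ∃ i, w (i+1) = w (i+2)
        · obtain ⟨i, hi⟩ := hA
          obtain ⟨g, hg, u, hu, -, hf⟩ := caseA w i hi
          exact hw g hg u hu hf
        · push_neg at hA
          obtain ⟨-, ⟨g, hg, u, hu, hf⟩⟩ := caseB w hA
          exact hw g hg u hu hf
end

section
/- In the word w over {a,b,c} obtained from the Thue–Morse word by the substitution a' ↦ aacb, b' ↦ accb, every occurrence of two consecutive equal letters is either cc followed by b or aa followed by c. Consequently, if θ is a morphic involution on {a,b,c} and θ(x)θ(x)θ(y) is a factor of w with (x,y) ∈ {(a,c),(c,b)}, then θ fixes a, b, c, i.e., θ is the identity. -/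
/-- Letters: `a = 0`, `b = 1`, `c = 2` in `Fin 3`.  In the word `w` obtained
from the Thue–Morse word `t` by `a' ↦ aacb`, `b' ↦ accb`, every occurrence of
two consecutive equal letters is either `cc` followed by `b` or `aa` followed
by `c`.  Consequently, for a morphic involution induced by a letter involution
`g`, if `[g x, g x, g y]` is a factor of `w` with `(x, y) ∈ {(a,c), (c,b)}`,
then `g` fixes `a`, `b`, `c`. -/
theorem double_letters_force_identity (t : ℕ → Bool)
    (h0 : t 0 = false)
    (hfix : ∀ n : ℕ, t (2 * n) = t n ∧ t (2 * n + 1) = !(t n))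
    (w : ℕ → Fin 3)
    (hw : ∀ n : ℕ, w n =
      (if t (n / 4) then ([0, 2, 2, 1] : List (Fin 3))
       else ([0, 0, 2, 1] : List (Fin 3))).getD (n % 4) 0) :
    (∀ i : ℕ, w i = w (i + 1) →
      (w i = 2 ∧ w (i + 2) = 1) ∨ (w i = 0 ∧ w (i + 2) = 2)) ∧
    (∀ g : Fin 3 → Fin 3, (∀ z, g (g z) = z) →
      ∀ x y : Fin 3, ((x, y) = ((0 : Fin 3), (2 : Fin 3)) ∨
        (x, y) = ((2 : Fin 3), (1 : Fin 3))) →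
      FactorOf [g x, g x, g y] w →
      g 0 = 0 ∧ g 1 = 1 ∧ g 2 = 2) := by
  have key : ∀ i : ℕ, w i = w (i + 1) →
      (w i = 2 ∧ w (i + 2) = 1) ∨ (w i = 0 ∧ w (i + 2) = 2) := by
    intro i h
    obtain ⟨q, r, hr, rfl⟩ : ∃ q r, r < 4 ∧ i = 4 * q + r :=
      ⟨i / 4, i % 4, Nat.mod_lt _ (by norm_num), by omega⟩
    interval_cases r
    · have e0 : (4*q+0)/4 = q := by omega
      have e0' : (4*q+0)%4 = 0 := by omega
      have e1 : (4*q+0+1)/4 = q := by omega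
      have e1' : (4*q+0+1)%4 = 1 := by omega
      have e2 : (4*q+0+2)/4 = q := by omega
      have e2' : (4*q+0+2)%4 = 2 := by omega
      rw [hw, hw, e0, e0', e1, e1'] at h
      rw [hw, hw, e0, e0', e2, e2']
      rcases Bool.eq_false_or_eq_true (t q) with ht | ht <;> rw [ht] at h ⊢ <;> revert h <;> decide
    · have e0 : (4*q+1)/4 = q := by omega
      have e0' : (4*q+1)%4 = 1 := by omega
      have e1 : (4*q+1+1)/4 = q := by omega
      have e1' : (4*q+1+1)%4 = 2 := by omega
      have e2 : (4*q+1+2)/4 = q := by omega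
      have e2' : (4*q+1+2)%4 = 3 := by omega
      rw [hw, hw, e0, e0', e1, e1'] at h
      rw [hw, hw, e0, e0', e2, e2']
      rcases Bool.eq_false_or_eq_true (t q) with ht | ht <;> rw [ht] at h ⊢ <;> revert h <;> decide
    · have e0 : (4*q+2)/4 = q := by omega
      have e0' : (4*q+2)%4 = 2 := by omega
      have e1 : (4*q+2+1)/4 = q := by omega
      have e1' : (4*q+2+1)%4 = 3 := by omega
      rw [hw, hw, e0, e0', e1, e1'] at h
      rcases Bool.eq_false_or_eq_true (t q) with ht | ht <;> rw [ht] at h <;> exact absurd h (by decide)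
    · have e0 : (4*q+3)/4 = q := by omega
      have e0' : (4*q+3)%4 = 3 := by omega
      have e1 : (4*q+3+1)/4 = q+1 := by omega
      have e1' : (4*q+3+1)%4 = 0 := by omega
      rw [hw, hw, e0, e0', e1, e1'] at h
      rcases Bool.eq_false_or_eq_true (t q) with ht | ht <;> rcases Bool.eq_false_or_eq_true (t (q+1)) with ht' | ht' <;> rw [ht, ht'] at h <;> exact absurd h (by decide)
  refine ⟨key, ?_⟩
  intro g hg x y hxy hf
  obtain ⟨i, hi⟩ := hf
  simp [List.range_succ] at hi
  obtain ⟨hx1, hx2, hy⟩ := hi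
  have tri : ∀ z : Fin 3, z = 0 ∨ z = 1 ∨ z = 2 := by decide
  have hk := key i (by rw [← hx1, ← hx2])
  rcases hxy with hxy | hxy <;>
    obtain ⟨rfl, rfl⟩ := Prod.mk.injEq .. ▸ (by exact ⟨congrArg Prod.fst hxy, congrArg Prod.snd hxy⟩ : x = _ ∧ y = _)
  · rcases hk with ⟨ha, hb⟩ | ⟨ha, hb⟩
    · exfalso
      have : g 2 = 1 := by rw [hy, hb]
      have h2 := hg 0
      rw [hx1, ha, this] at h2
      exact absurd h2 (by decide)
    · have g0 : g 0 = 0 := by rw [hx1, ha]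
      have g2 : g 2 = 2 := by rw [hy, hb]
      refine ⟨g0, ?_, g2⟩
      rcases tri (g 1) with h1 | h1 | h1
      · have := hg 1; rw [h1, g0] at this; exact absurd this (by decide)
      · exact h1
      · have := hg 1; rw [h1, g2] at this; exact absurd this (by decide)
  · rcases hk with ⟨ha, hb⟩ | ⟨ha, hb⟩
    · have g2 : g 2 = 2 := by rw [hx1, ha]
      have g1 : g 1 = 1 := by rw [hy, hb]
      refine ⟨?_, g1, g2⟩
      rcases tri (g 0) with h1 | h1 | h1
      · exact h1
      · have := hg 0; rw [h1, g1] at this; exact absurd this (by decide)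
      · have := hg 0; rw [h1, g2] at this; exact absurd this (by decide)
    · exfalso
      have g2 : g 2 = 0 := by rw [hx1, ha]
      have g1 : g 1 = 2 := by rw [hy, hb]
      have := hg 1
      rw [g1, g2] at this
      exact absurd this (by decide)
end

section
/- If u is a word over {a,b,c} of length at least 7 that is a factor of the word w obtained from the Thue–Morse word via a' ↦ aacb, b' ↦ accb, then u contains aacb or accb as a factor. -/
/-- Letters: `a = 0`, `b = 1`, `c = 2` in `Fin 3`.  Every factor `u` of length
at least `7` of the word `w` obtained from the Thue–Morse word via
`a' ↦ aacb`, `b' ↦ accb` contains `aacb` or `accb` as a (finite) factor. -/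
theorem long_factor_contains_block (t : ℕ → Bool)
    (h0 : t 0 = false)
    (hfix : ∀ n : ℕ, t (2 * n) = t n ∧ t (2 * n + 1) = !(t n))
    (w : ℕ → Fin 3)
    (hw : ∀ n : ℕ, w n =
      (if t (n / 4) then ([0, 2, 2, 1] : List (Fin 3))
       else ([0, 0, 2, 1] : List (Fin 3))).getD (n % 4) 0) :
    ∀ u : List (Fin 3), FactorOf u w → 7 ≤ u.length →
      ([0, 0, 2, 1] : List (Fin 3)) <:+: u ∨
      ([0, 2, 2, 1] : List (Fin 3)) <:+: u := by
  rintro u ⟨i, hu⟩ hlen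
  set off := (4 - i % 4) % 4 with hoffdef
  have hmod : (i + off) % 4 = 0 := by omega
  set m := (i + off) / 4 with hm
  have hL : off + 4 ≤ u.length := by omega
  set p : List (Fin 3) := if t m then [0,2,2,1] else [0,0,2,1] with hp
  have hplen : p.length = 4 := by rcases h : t m <;> simp [hp, h]
  have hget : ∀ j (hj : j < u.length), u[j] = w (i + j) := by
    intro j hj
    rw [List.getElem_of_eq hu, List.getElem_map, List.getElem_range]
  have h1 : p = (u.drop off).take 4 := by
    apply List.ext_getElem
    · simp [hplen]; omega
    · intro j hj hj2
      have hj4 : j < 4 := by omega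
      have hju : off + j < u.length := by omega
      rw [List.getElem_take, List.getElem_drop, hget _ hju, hw]
      have hd : (i + (off + j)) / 4 = m := by omega
      have hmo : (i + (off + j)) % 4 = j := by omega
      rw [hd, hmo, ← hp, List.getD_eq_getElem _ _ (by omega)]
  have hinf : p <:+: u := h1 ▸ ((u.drop off).take_prefix 4).isInfix.trans
    (u.drop_suffix off).isInfix
  rcases h : t m with hf | ht
  · left; simpa [hp, h] using hinf
  · right; simpa [hp, h] using hinf
end
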